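/- Let F be a real normed vector space and u : ℂ → F a smooth map whose energy density e_u satisfies that both z ↦ e_u(z) and z ↦ |z|·e_u(z) are Lebesgue-integrable on ℂ. For c ∈ ℂ and r ∈ ℝ with r ≠ −1, define ((c,r)·u)(z) = u((1+r)^{-1}z − c). Then the ℂ-valued integrals satisfy ∫_ℂ e_{(c,r)·u}(z) · z dA(z) = (1+r) · ( ∫_ℂ e_u(z) · z dA(z) + c · ∫_ℂ e_u(z) dA(z) ). -/

import Mathlib

open MeasureTheory

/-- The (flat) energy density of a map `u : ℂ → F`: writing `z = s + it`,
`e_u(z) = ‖∂u/∂s(z)‖² + ‖∂u/∂t(z)‖²`, expressed via the Fréchet derivative in the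
directions `1` and `I`. -/
noncomputable def energyDensity {F : Type*} [NormedAddCommGroup F] [NormedSpace ℝ F]
    (u : ℂ → F) (z : ℂ) : ℝ :=
  ‖fderiv ℝ u z 1‖ ^ 2 + ‖fderiv ℝ u z Complex.I‖ ^ 2

/-- For a smooth map `u : ℂ → F` into a real normed vector space whose energy
density `e_u` and first moment `|z| e_u(z)` are Lebesgue-integrable on `ℂ`, and for `c ∈ ℂ`,
`r ∈ ℝ` with `r ≠ -1`, putting `((c,r)·u)(z) = u((1+r)⁻¹ z - c)`, one has
`∫_ℂ e_{(c,r)·u}(z) · z dA = (1+r) (∫_ℂ e_u(z) · z dA + c ∫_ℂ e_u(z) dA)`. -/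
theorem stmt_6 {F : Type*} [NormedAddCommGroup F] [NormedSpace ℝ F]
    (u : ℂ → F) (hu : ContDiff ℝ (⊤ : ℕ∞) u)
    (h1 : Integrable (fun z : ℂ => energyDensity u z))
    (h2 : Integrable (fun z : ℂ => ‖z‖ * energyDensity u z))
    (c : ℂ) (r : ℝ) (hr : r ≠ -1) :
    (∫ z : ℂ, energyDensity (fun w : ℂ => u (((1 + r)⁻¹ : ℝ) • w - c)) z • z) =
      (1 + r) • ((∫ z : ℂ, energyDensity u z • z)
        + (∫ z : ℂ, energyDensity u z) • c) := by
  set a : ℝ := (1 + r)⁻¹ with ha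
  have hra : (1 : ℝ) + r ≠ 0 := by
    intro h; apply hr; linarith
  have haz : a ≠ 0 := inv_ne_zero hra
  -- Step 1: energy density of the rescaled map
  have hdens : ∀ z : ℂ, energyDensity (fun w : ℂ => u (a • w - c)) z
      = a ^ 2 * energyDensity u (a • z - c) := by
    intro z
    have hinner : HasFDerivAt (fun w : ℂ => a • w - c)
        (a • ContinuousLinearMap.id ℝ ℂ) z :=
      ((hasFDerivAt_id z).const_smul a).sub_const c
    have houter : HasFDerivAt u (fderiv ℝ u (a • z - c)) (a • z - c) :=
      (hu.differentiable (by simp) (a • z - c)).hasFDerivAt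
    have hcomp : HasFDerivAt (fun w : ℂ => u (a • w - c))
        ((fderiv ℝ u (a • z - c)).comp (a • ContinuousLinearMap.id ℝ ℂ)) z :=
      houter.comp z hinner
    have hf := hcomp.fderiv
    simp only [energyDensity, hf]
    have h1' : ((fderiv ℝ u (a • z - c)).comp (a • ContinuousLinearMap.id ℝ ℂ)) 1
        = a • (fderiv ℝ u (a • z - c) 1) := by
      simp [ContinuousLinearMap.comp_apply, (fderiv ℝ u (a • z - c)).map_smul]
    have h2' : ((fderiv ℝ u (a • z - c)).comp (a • ContinuousLinearMap.id ℝ ℂ)) Complex.I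
        = a • (fderiv ℝ u (a • z - c) Complex.I) := by
      simp [ContinuousLinearMap.comp_apply, (fderiv ℝ u (a • z - c)).map_smul]
    rw [h1', h2', norm_smul, norm_smul]
    simp only [Real.norm_eq_abs, mul_pow, sq_abs]
    ring
  -- Step 2: rewrite integrand as a translate-and-scale of a fixed function
  set g : ℂ → ℂ := fun y => a⁻¹ • (energyDensity u y • y + energyDensity u y • c) with hg
  have key : ∀ z : ℂ, energyDensity (fun w : ℂ => u (a • w - c)) z • z
      = (a ^ 2) • g (a • z - c) := by
    intro z
    rw [hdens z, hg]
    have hz : a⁻¹ • ((a • z - c) + c) = z := by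
      rw [sub_add_cancel, smul_smul, inv_mul_cancel₀ haz, one_smul]
    calc (a ^ 2 * energyDensity u (a • z - c)) • z
        = (a ^ 2) • (energyDensity u (a • z - c) • z) := by
          rw [mul_smul]
      _ = (a ^ 2) • (energyDensity u (a • z - c) • (a⁻¹ • ((a • z - c) + c))) := by rw [hz]
      _ = (a ^ 2) • (a⁻¹ • (energyDensity u (a • z - c) • (a • z - c)
            + energyDensity u (a • z - c) • c)) := by
          rw [smul_comm (energyDensity u (a • z - c)) a⁻¹, smul_add]
  simp_rw [key]
  rw [integral_smul]
  -- Step 3: change of variables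
  have hcv : (∫ z : ℂ, g (a • z - c)) = ((a : ℝ) ^ 2)⁻¹ • ∫ y : ℂ, g y := by
    have : (∫ z : ℂ, g (a • z - c)) = ∫ z : ℂ, (fun w => g (w - c)) (a • z) := by
      simp
    rw [this, MeasureTheory.Measure.integral_comp_smul volume (fun w => g (w - c)) a,
      integral_sub_right_eq_self g c]
    congr 1
    rw [Complex.finrank_real_complex, abs_of_nonneg (inv_nonneg.2 (sq_nonneg a))]
  rw [hcv, smul_smul, mul_inv_cancel₀ (pow_ne_zero 2 haz), one_smul]
  -- Step 4: compute ∫ g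
  have hcont : Continuous fun z : ℂ => energyDensity u z := by
    have h1c : Continuous fun z : ℂ => fderiv ℝ u z :=
      hu.continuous_fderiv (by simp)
    unfold energyDensity
    fun_prop
  have hint1 : Integrable (fun y : ℂ => energyDensity u y • y) := by
    refine ⟨(hcont.smul continuous_id).aestronglyMeasurable, ?_⟩
    have := h2.hasFiniteIntegral
    refine this.congr' ?_
    filter_upwards with y
    have hnn : (0:ℝ) ≤ energyDensity u y := by
      unfold energyDensity; positivity
    simp [norm_smul, Real.norm_eq_abs, abs_of_nonneg hnn, mul_comm]
  have hint2 : Integrable (fun y : ℂ => energyDensity u y • c) := h1.smul_const c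
  rw [hg]
  simp only
  rw [integral_smul, integral_add hint1 hint2, integral_smul_const]
  congr 1
  rw [ha, inv_inv]
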